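/- arXiv:1503.02265 — 2 statements merged into one kernel-verified Lean document; each statement's English description precedes it below -/
import Mathlib

section
/- Let R be a ring, n ≥ 0, and let E, F be R-modules given with presentations r_E : P_E → E and r_F : P_F → F, where P_E is projective, K_E = ker(r_E), K_F = ker(r_F). Form the Moore complexes M(E,n) (K_E in degree n+1, P_E in degree n, differential the inclusion) and M(F,n). Then the map sending a chain map u : M(E,n) → M(F,n) to the induced homomorphism H_n(u) : E → F (under the identifications H_n(M(E,n)) = E and H_n(M(F,n)) = F) induces a bijection between chain homotopy classes of chain maps M(E,n) → M(F,n) and Hom_R(E,F). -/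
/- Given an `R`-module `G` with a surjection `r : P → G` and `K = ker r`, the Moore
complex `M(G,n)` is the chain complex with `K` in degree `n+1`, `P` in degree `n`,
differential the inclusion `K ↪ P`, and `0` elsewhere.  A chain map
`u : M(E,n) → M(F,n)` is a family `u m` commuting with the differentials, and two
chain maps are chain homotopic if their difference is `∂∘S + S∘∂` for a degree `+1`
family `S`.  The induced homomorphism `H_n(u) : E → F` (under the identifications
`H_n(M(E,n)) = E`, `H_n(M(F,n)) = F` coming from `r_E, r_F`) is the unique
`φ : E → F` with `φ ∘ r_E = r_F ∘ u_n`. -/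

variable (R : Type*) [Ring R]

section
variable {P G : Type*} [AddCommGroup P] [Module R P] [AddCommGroup G] [Module R G]

/-- Graded pieces of the Moore complex `M(G,n)`: `ker r` in degree `n+1`, `P` (as the
submodule `⊤` of itself) in degree `n`, `0` elsewhere. -/
noncomputable def mooreS (r : P →ₗ[R] G) (n m : ℤ) : Submodule R P :=
  if m = n then ⊤ else if m = n + 1 then LinearMap.ker r else ⊥

/-- The degree-`m` piece of the Moore complex `M(G,n)`. -/
abbrev Moore (r : P →ₗ[R] G) (n m : ℤ) : Type _ := ↥(mooreS R r n m)

/-- Differential of the Moore complex: the inclusion `K ↪ P` from degree `n+1` to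
degree `n`, and `0` elsewhere. -/
noncomputable def mooreD (r : P →ₗ[R] G) (n m : ℤ) :
    Moore R r n (m+1) →ₗ[R] Moore R r n m :=
  if h : m = n then
    Submodule.inclusion (by
      subst h
      have : mooreS R r m m = ⊤ := if_pos rfl
      rw [this]; exact le_top)
  else 0

/-- The canonical isomorphism `P ≃ M(G,n)_n`, as a linear map. -/
noncomputable def inclTop (r : P →ₗ[R] G) (n : ℤ) : P →ₗ[R] Moore R r n n :=
  LinearMap.codRestrict (mooreS R r n n) LinearMap.id (fun _ => by
    have : mooreS R r n n = ⊤ := if_pos rfl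
    rw [this]; exact Submodule.mem_top)

-- auxiliary lemmas
lemma mooreS_self (r : P →ₗ[R] G) (n : ℤ) : mooreS R r n n = ⊤ := if_pos rfl

lemma mooreS_succ (r : P →ₗ[R] G) (n : ℤ) : mooreS R r n (n+1) = LinearMap.ker r := by
  unfold mooreS
  rw [if_neg (by omega), if_pos rfl]

lemma mooreS_bot (r : P →ₗ[R] G) {n m : ℤ} (h1 : m ≠ n) (h2 : m ≠ n + 1) :
    mooreS R r n m = ⊥ := by
  unfold mooreS; rw [if_neg h1, if_neg h2]

lemma mooreD_eq_zero (r : P →ₗ[R] G) {n m : ℤ} (h : m ≠ n) :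
    mooreD R r n m = 0 := dif_neg h

lemma coe_mooreD_self (r : P →ₗ[R] G) (n : ℤ) (x : Moore R r n (n+1)) :
    ((mooreD R r n n x : Moore R r n n) : P) = (x : P) := by
  rw [mooreD, dif_pos rfl]
  rfl

lemma coe_inclTop (r : P →ₗ[R] G) (n : ℤ) (x : P) :
    ((inclTop R r n x : Moore R r n n) : P) = x := rfl

lemma mem_mooreS_succ {r : P →ₗ[R] G} {n : ℤ} {x : P} :
    x ∈ mooreS R r n (n+1) ↔ x ∈ LinearMap.ker r := by rw [mooreS_succ]

lemma moore_eq_zero (r : P →ₗ[R] G) {n m : ℤ} (h1 : m ≠ n) (h2 : m ≠ n + 1)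
    (x : Moore R r n m) : x = 0 := by
  obtain ⟨y, hy⟩ := x
  rw [mooreS_bot R r h1 h2] at hy
  exact Subtype.ext hy

end

variable {PE PF E F : Type*}
  [AddCommGroup PE] [Module R PE] [AddCommGroup PF] [Module R PF]
  [AddCommGroup E] [Module R E] [AddCommGroup F] [Module R F]
  (rE : PE →ₗ[R] E) (rF : PF →ₗ[R] F) (n : ℤ)

/-- `u` is a chain map `M(E,n) → M(F,n)`. -/
def IsChainMap (u : ∀ m : ℤ, Moore R rE n m →ₗ[R] Moore R rF n m) : Prop :=
  ∀ m : ℤ, (mooreD R rF n m).comp (u (m+1)) = (u m).comp (mooreD R rE n m)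

/-- The map `P_E → P_F` carried by `u` in degree `n`. -/
noncomputable def ind (u : ∀ m : ℤ, Moore R rE n m →ₗ[R] Moore R rF n m) :
    PE →ₗ[R] PF :=
  ((mooreS R rF n n).subtype).comp ((u n).comp (inclTop R rE n))

/-- Chain homotopy of chain maps `M(E,n) → M(F,n)`. -/
def Homotopic (u v : ∀ m : ℤ, Moore R rE n m →ₗ[R] Moore R rF n m) : Prop :=
  ∃ S : ∀ m : ℤ, Moore R rE n m →ₗ[R] Moore R rF n (m+1),
    ∀ m : ℤ, u (m+1) - v (m+1)
      = (mooreD R rF n (m+1)).comp (S (m+1)) + (S m).comp (mooreD R rE n m)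

lemma ind_apply (u : ∀ m : ℤ, Moore R rE n m →ₗ[R] Moore R rF n m) (x : PE) :
    ind R rE rF n u x = ((u n (inclTop R rE n x) : Moore R rF n n) : PF) := rfl

/-- key: underlying element of `u (n+1) x` is `ind u` of the underlying element. -/
lemma coe_u_succ {u : ∀ m : ℤ, Moore R rE n m →ₗ[R] Moore R rF n m}
    (hu : IsChainMap R rE rF n u) (x : Moore R rE n (n+1)) :
    ((u (n+1) x : Moore R rF n (n+1)) : PF) = ind R rE rF n u (x : PE) := by
  have h := congrArg (fun f => ((f x : Moore R rF n n) : PF)) (hu n)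
  simp only [LinearMap.comp_apply] at h
  rw [coe_mooreD_self] at h
  rw [h, ind_apply]
  congr 1
  congr 1
  apply Subtype.ext
  rw [coe_inclTop, coe_mooreD_self]

lemma ind_mem_ker {u : ∀ m : ℤ, Moore R rE n m →ₗ[R] Moore R rF n m}
    (hu : IsChainMap R rE rF n u) {x : PE} (hx : x ∈ LinearMap.ker rE) :
    ind R rE rF n u x ∈ LinearMap.ker rF := by
  have hx' : x ∈ mooreS R rE n (n+1) := (mem_mooreS_succ R).mpr hx
  have := coe_u_succ R rE rF n hu ⟨x, hx'⟩
  rw [← this]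
  exact (mem_mooreS_succ R).mp (u (n+1) ⟨x, hx'⟩).2

/-- chain map built from a map `f : PE → PF` carrying `ker rE` into `ker rF`. -/
noncomputable def chainOf (f : PE →ₗ[R] PF)
    (hf : ∀ x ∈ LinearMap.ker rE, f x ∈ LinearMap.ker rF) (m : ℤ) :
    Moore R rE n m →ₗ[R] Moore R rF n m :=
  f.restrict (p := mooreS R rE n m) (q := mooreS R rF n m) (fun x hx => by
    by_cases h1 : m = n
    · subst h1; rw [mooreS_self]; trivial
    by_cases h2 : m = n + 1
    · subst h2
      rw [mooreS_succ] at hx ⊢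
      exact hf x hx
    · rw [mooreS_bot R rE h1 h2] at hx
      simp only [Submodule.mem_bot] at hx
      subst hx
      simp)

lemma isChainMap_chainOf (f : PE →ₗ[R] PF)
    (hf : ∀ x ∈ LinearMap.ker rE, f x ∈ LinearMap.ker rF) :
    IsChainMap R rE rF n (chainOf R rE rF n f hf) := by
  intro m
  by_cases h : m = n
  · subst h
    ext x
    show ((mooreD R rF m m (chainOf R rE rF m f hf (m+1) x) : Moore R rF m m) : PF)
      = ((chainOf R rE rF m f hf m (mooreD R rE m m x) : Moore R rF m m) : PF)
    rw [coe_mooreD_self]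
    unfold chainOf
    rw [LinearMap.restrict_coe_apply, LinearMap.restrict_coe_apply, coe_mooreD_self]
  · rw [mooreD_eq_zero R rF h, mooreD_eq_zero R rE h]
    ext x
    simp

lemma ind_chainOf (f : PE →ₗ[R] PF)
    (hf : ∀ x ∈ LinearMap.ker rE, f x ∈ LinearMap.ker rF) :
    ind R rE rF n (chainOf R rE rF n f hf) = f := by
  ext x
  rw [ind_apply]
  unfold chainOf
  rw [LinearMap.restrict_coe_apply, coe_inclTop]

/-- descend along a surjection -/
lemma descend (g : PE →ₗ[R] F) (hrE : Function.Surjective rE)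
    (hg : LinearMap.ker rE ≤ LinearMap.ker g) :
    ∃ φ : E →ₗ[R] F, φ.comp rE = g := by
  refine ⟨(Submodule.liftQ _ g hg).comp (rE.quotKerEquivOfSurjective hrE).symm.toLinearMap, ?_⟩
  ext x
  have : (rE.quotKerEquivOfSurjective hrE).symm (rE x) = Submodule.Quotient.mk x := by
    rw [LinearEquiv.symm_apply_eq]
    rfl
  simp [this]

lemma coe_u_self (u : ∀ m : ℤ, Moore R rE n m →ₗ[R] Moore R rF n m)
    (x : Moore R rE n n) :
    ((u n x : Moore R rF n n) : PF) = ind R rE rF n u (x : PE) := by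
  rw [ind_apply]
  congr 2

noncomputable def homotopyS (g : PE →ₗ[R] PF) (hg : ∀ x, g x ∈ LinearMap.ker rF)
    (m : ℤ) : Moore R rE n m →ₗ[R] Moore R rF n (m+1) :=
  if h : m = n then
    LinearMap.codRestrict (mooreS R rF n (m+1)) (g.comp (mooreS R rE n m).subtype)
      (fun x => by subst h; exact (mem_mooreS_succ R).mpr (hg _))
  else 0

lemma homotopyS_eq_zero (g : PE →ₗ[R] PF) (hg : ∀ x, g x ∈ LinearMap.ker rF)
    {m : ℤ} (h : m ≠ n) : homotopyS R rE rF n g hg m = 0 := dif_neg h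

lemma coe_homotopyS_self (g : PE →ₗ[R] PF) (hg : ∀ x, g x ∈ LinearMap.ker rF)
    (x : Moore R rE n n) :
    ((homotopyS R rE rF n g hg n x : Moore R rF n (n+1)) : PF) = g (x : PE) := by
  unfold homotopyS
  rw [dif_pos rfl]
  rfl

lemma homotopic_of_ind {u v : ∀ m : ℤ, Moore R rE n m →ₗ[R] Moore R rF n m}
    (hu : IsChainMap R rE rF n u) (hv : IsChainMap R rE rF n v)
    (hg : ∀ x, (ind R rE rF n u - ind R rE rF n v) x ∈ LinearMap.ker rF) :
    Homotopic R rE rF n u v := by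
  refine ⟨homotopyS R rE rF n _ hg, fun m => ?_⟩
  by_cases h : m = n
  · subst h
    rw [mooreD_eq_zero R rF (show (m:ℤ)+1 ≠ m by omega)]
    simp only [LinearMap.zero_comp, zero_add]
    ext x
    simp only [LinearMap.sub_apply, LinearMap.comp_apply, AddSubgroupClass.coe_sub]
    rw [coe_u_succ R rE rF m hu x, coe_u_succ R rE rF m hv x,
      coe_homotopyS_self R rE rF m _ hg (mooreD R rE m m x), coe_mooreD_self]
    simp
  · by_cases h' : m + 1 = n
    · subst h'
      rw [mooreD_eq_zero R rE (show m ≠ m+1 by omega),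
        homotopyS_eq_zero R rE rF (m+1) _ hg (show m ≠ m+1 by omega)]
      simp only [LinearMap.comp_zero, LinearMap.zero_comp, add_zero]
      ext x
      simp only [LinearMap.sub_apply, LinearMap.comp_apply, AddSubgroupClass.coe_sub]
      rw [coe_u_self R rE rF (m+1) u x, coe_u_self R rE rF (m+1) v x,
        coe_mooreD_self, coe_homotopyS_self]
      simp
    · ext x
      rw [show x = 0 from moore_eq_zero R rE (by omega) (by omega) x]
      simp

/-- for presentations `r_E : P_E ↠ E` (with `P_E` projective) and
`r_F : P_F ↠ F`, the assignment `u ↦ H_n(u)` — i.e. `u ↦ φ` where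
`φ ∘ r_E = r_F ∘ u_n` — induces a bijection between chain homotopy classes of chain
maps `M(E,n) → M(F,n)` and `Hom_R(E,F)`:  every chain map induces some `φ`, two
chain maps are homotopic iff they induce the same `φ`, and every `φ` is induced. -/
theorem statement13 (hn : 0 ≤ n)
    (hrE : Function.Surjective rE) (hrF : Function.Surjective rF)
    [Module.Projective R PE] :
    (∀ u, IsChainMap R rE rF n u →
        ∃ φ : E →ₗ[R] F, φ.comp rE = rF.comp (ind R rE rF n u)) ∧
    (∀ u v, IsChainMap R rE rF n u → IsChainMap R rE rF n v →
      ∀ φ ψ : E →ₗ[R] F,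
        φ.comp rE = rF.comp (ind R rE rF n u) →
        ψ.comp rE = rF.comp (ind R rE rF n v) →
          (Homotopic R rE rF n u v ↔ φ = ψ)) ∧
    (∀ φ : E →ₗ[R] F, ∃ u, IsChainMap R rE rF n u ∧
        φ.comp rE = rF.comp (ind R rE rF n u)) := by
  refine ⟨?_, ?_, ?_⟩
  · intro u hu
    refine descend R rE (rF.comp (ind R rE rF n u)) hrE (fun x hx => ?_)
    rw [LinearMap.mem_ker, LinearMap.comp_apply]
    exact LinearMap.mem_ker.mp (ind_mem_ker R rE rF n hu hx)
  · intro u v hu hv φ ψ hφ hψ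
    constructor
    · rintro ⟨S, hS⟩
      obtain ⟨m, rfl⟩ : ∃ m, m + 1 = n := ⟨n - 1, by ring⟩
      have h := hS m
      rw [mooreD_eq_zero R rE (show m ≠ m+1 by omega)] at h
      simp only [LinearMap.comp_zero, add_zero] at h
      have key : ∀ x : PE,
          rF (ind R rE rF (m+1) u x) = rF (ind R rE rF (m+1) v x) := by
        intro x
        have h2 := congrArg
          (fun f => ((f (inclTop R rE (m+1) x) : Moore R rF (m+1) (m+1)) : PF)) h
        simp only [LinearMap.sub_apply, LinearMap.comp_apply,
          AddSubgroupClass.coe_sub] at h2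
        rw [coe_u_self R rE rF (m+1) u, coe_u_self R rE rF (m+1) v,
          coe_mooreD_self, coe_inclTop] at h2
        have hm : rF ((S (m+1) (inclTop R rE (m+1) x)
            : Moore R rF (m+1) (m+1+1)) : PF) = 0 :=
          LinearMap.mem_ker.mp
            ((mem_mooreS_succ R).mp (S (m+1) (inclTop R rE (m+1) x)).2)
        have h3 : rF (ind R rE rF (m+1) u x - ind R rE rF (m+1) v x) = 0 := by
          rw [h2]; exact hm
        rw [map_sub, sub_eq_zero] at h3
        exact h3
      ext e'
      obtain ⟨x, rfl⟩ := hrE e'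
      have h4 := congrArg (fun f => f x) hφ
      have h5 := congrArg (fun f => f x) hψ
      simp only [LinearMap.comp_apply] at h4 h5
      rw [h4, h5]
      exact key x
    · rintro rfl
      refine homotopic_of_ind R rE rF n hu hv (fun x => ?_)
      have h4 := congrArg (fun f => f x) hφ
      have h5 := congrArg (fun f => f x) hψ
      simp only [LinearMap.comp_apply] at h4 h5
      rw [LinearMap.mem_ker, LinearMap.sub_apply, map_sub, ← h4, ← h5, sub_self]
  · intro φ
    obtain ⟨f, hf⟩ := Module.projective_lifting_property rF (φ.comp rE) hrF
    have hker : ∀ x ∈ LinearMap.ker rE, f x ∈ LinearMap.ker rF := by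
      intro x hx
      have h1 := congrArg (fun g => g x) hf
      simp only [LinearMap.comp_apply] at h1
      rw [LinearMap.mem_ker, h1, LinearMap.mem_ker.mp hx, map_zero]
    refine ⟨chainOf R rE rF n f hker, isChainMap_chainOf R rE rF n f hker, ?_⟩
    rw [ind_chainOf]
    exact hf.symm
end

section
/- Consider the chain complexes of abelian groups: A with A_1 = A_0 = ℤ and differential multiplication by 2; B with B_1 = B_0 = ℤ and differential multiplication by 4; C with C_1 = C_0 = ℤ and differential multiplication by 2; D with D_2 = D_1 = ℤ and differential multiplication by 2 (all other terms 0). Let f : A → B have f_1 = 1 and f_0 = 2, let g : B → C have g_1 = 2 and g_0 = 1, and let h : C → D have h_1 = 1 : C_1 → D_1 (and all other components 0). Then f, g, h are chain maps, g∘f and h∘g are nullhomotopic, and for EVERY nullhomotopy S of g∘f and EVERY nullhomotopy T of h∘g, the Toda map φ(S,T) : ΣA → D is not chain homotopic to zero. (Hence the Toda bracket ⟨h,g,f⟩ does not vanish.) -/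
/-! STATEMENT 16.  Chain complexes of abelian groups are encoded as families
`M r : ℤ → Type`, `(M r) m = Fin (r m) → ℤ` (so `r m` copies of `ℤ` in degree `m`),
with differentials `d m : (M r) (m+1) →ₗ[ℤ] (M r) m` given by integer matrices. -/

abbrev M (r : ℤ → ℕ) (m : ℤ) : Type := Fin (r m) → ℤ

/-- ranks: A has ℤ in degrees 0 and 1 -/
def rA : ℤ → ℕ := fun m => if m = 0 ∨ m = 1 then 1 else 0
def rB : ℤ → ℕ := fun m => if m = 0 ∨ m = 1 then 1 else 0
def rC : ℤ → ℕ := fun m => if m = 0 ∨ m = 1 then 1 else 0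
def rD : ℤ → ℕ := fun m => if m = 1 ∨ m = 2 then 1 else 0

/-- A = (ℤ --2--> ℤ) in degrees 1 → 0 -/
noncomputable def dA (m : ℤ) : M rA (m+1) →ₗ[ℤ] M rA m :=
  Matrix.mulVecLin (Matrix.of fun _ _ => if m = 0 then (2:ℤ) else 0)

noncomputable def dB (m : ℤ) : M rB (m+1) →ₗ[ℤ] M rB m :=
  Matrix.mulVecLin (Matrix.of fun _ _ => if m = 0 then (4:ℤ) else 0)

noncomputable def dC (m : ℤ) : M rC (m+1) →ₗ[ℤ] M rC m :=
  Matrix.mulVecLin (Matrix.of fun _ _ => if m = 0 then (2:ℤ) else 0)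

/-- D = (ℤ --2--> ℤ) in degrees 2 → 1 -/
noncomputable def dD (m : ℤ) : M rD (m+1) →ₗ[ℤ] M rD m :=
  Matrix.mulVecLin (Matrix.of fun _ _ => if m = 1 then (2:ℤ) else 0)

/-- f : A → B with f₁ = 1, f₀ = 2 -/
noncomputable def fm (m : ℤ) : M rA m →ₗ[ℤ] M rB m :=
  Matrix.mulVecLin (Matrix.of fun _ _ => if m = 1 then (1:ℤ) else if m = 0 then 2 else 0)

/-- g : B → C with g₁ = 2, g₀ = 1 -/
noncomputable def gm (m : ℤ) : M rB m →ₗ[ℤ] M rC m :=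
  Matrix.mulVecLin (Matrix.of fun _ _ => if m = 1 then (2:ℤ) else if m = 0 then 1 else 0)

/-- h : C → D with h₁ = 1 (and all other components 0) -/
noncomputable def hm (m : ℤ) : M rC m →ₗ[ℤ] M rD m :=
  Matrix.mulVecLin (Matrix.of fun _ _ => if m = 1 then (1:ℤ) else 0)

-- Auxiliary lemmas -----------------------------------------------------------

lemma eval1 {k n : ℕ} (hn : n = 1) (c : ℤ) (w : Fin n → ℤ) (j : Fin k) :
    (Matrix.of fun _ _ => c).mulVecLin w j = c * w ⟨0, hn ▸ Nat.one_pos⟩ := by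
  show ∑ x : Fin n, c * w x = _
  rw [Fintype.sum_eq_single (⟨0, hn ▸ Nat.one_pos⟩ : Fin n)
    (fun x hx => absurd (Fin.ext (by have := x.isLt; omega)) hx)]

lemma eval0 {k n : ℕ} (hn : n = 0) (c : ℤ) (w : Fin n → ℤ) (j : Fin k) :
    (Matrix.of fun _ _ => c).mulVecLin w j = 0 := by
  show ∑ x : Fin n, c * w x = 0
  exact Finset.sum_eq_zero fun x _ => absurd x.isLt (by omega)

noncomputable def Sdef (t : ℤ) : M rA t →ₗ[ℤ] M rC (t+1) :=
  Matrix.mulVecLin (Matrix.of fun _ _ => if t = 0 then (1:ℤ) else 0)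

noncomputable def Tdef (t : ℤ) : M rB t →ₗ[ℤ] M rD (t+1) :=
  Matrix.mulVecLin (Matrix.of fun _ _ => if t = 0 then (0:ℤ) else if t = 1 then 1 else 0)

lemma toda_contradiction
    (S : ∀ t : ℤ, M rA t →ₗ[ℤ] M rC (t+1)) (T : ∀ t : ℤ, M rB t →ₗ[ℤ] M rD (t+1))
    (hS : ∀ t : ℤ, (gm (t+1)).comp (fm (t+1)) = (dC (t+1)).comp (S (t+1)) + (S t).comp (dA t))
    (U : ∀ t : ℤ, M rA t →ₗ[ℤ] M rD (t+1+1))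
    (hU : ∀ t : ℤ, (hm (t+1+1)).comp (S (t+1)) - (T (t+1)).comp (fm (t+1))
            = (dD (t+1+1)).comp (U (t+1)) - (U t).comp (dA t)) : False := by
  -- first equation: from hS 0, evaluated on the basis vector of A₁
  have E1 := congrFun (LinearMap.congr_fun (hS 0)
    (fun _ => 1 : M rA (0+1))) (⟨0, Nat.one_pos⟩ : Fin (rC (0+1)))
  have efm1 : fm (0+1) (fun _ => 1 : M rA (0+1)) = (fun _ => (1:ℤ) : M rB (0+1)) := by
    funext j; simp only [fm]; rw [eval1 (show rA (0+1) = 1 from rfl)]; norm_num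
  have eda0 : dA 0 (fun _ => 1 : M rA (0+1)) = (2:ℤ) • (fun _ => (1:ℤ) : M rA 0) := by
    funext j; simp only [dA]; rw [eval1 (show rA (0+1) = 1 from rfl)]; norm_num
  rw [LinearMap.comp_apply, LinearMap.add_apply, LinearMap.comp_apply,
    LinearMap.comp_apply, efm1, eda0, map_smul] at E1
  simp only [Pi.add_apply] at E1
  have egm1 : gm (0+1) (fun _ => (1:ℤ) : M rB (0+1)) (⟨0, Nat.one_pos⟩ : Fin (rC (0+1))) = 2 := by
    simp only [gm]; rw [eval1 (show rB (0+1) = 1 from rfl)]; norm_num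
  have edc1 : dC (0+1) (S (0+1) (fun _ => 1 : M rA (0+1))) (⟨0, Nat.one_pos⟩ : Fin (rC (0+1))) = 0 := by
    simp only [dC]; exact eval0 (show rC (0+1+1) = 0 from rfl) _ _ _
  rw [egm1, edc1] at E1
  simp only [Pi.smul_apply, smul_eq_mul, zero_add] at E1
  -- E1 : 2 = 2 * S 0 (fun _ => 1) ⟨0, _⟩
  -- second equation: from hU (-1), evaluated on the basis vector of A₀
  have E2 := congrFun (LinearMap.congr_fun (hU (-1))
    (fun _ => 1 : M rA ((-1)+1))) (⟨0, Nat.one_pos⟩ : Fin (rD ((-1)+1+1)))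
  have ehm : ∀ w : M rC ((-1)+1+1), hm ((-1)+1+1) w (⟨0, Nat.one_pos⟩ : Fin (rD ((-1)+1+1)))
      = w ⟨0, Nat.one_pos⟩ := by
    intro w; simp only [hm]; rw [eval1 (show rC ((-1)+1+1) = 1 from rfl)]; norm_num
  have efm0 : fm ((-1)+1) (fun _ => 1 : M rA ((-1)+1))
      = (2:ℤ) • (fun _ => (1:ℤ) : M rB ((-1)+1)) := by
    funext j; simp only [fm]; rw [eval1 (show rA ((-1)+1) = 1 from rfl)]; norm_num
  have edd : ∀ w : M rD ((-1)+1+1+1), dD ((-1)+1+1) w (⟨0, Nat.one_pos⟩ : Fin (rD ((-1)+1+1)))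
      = 2 * w ⟨0, Nat.one_pos⟩ := by
    intro w; simp only [dD]; rw [eval1 (show rD ((-1)+1+1+1) = 1 from rfl)]; norm_num
  have edam : dA (-1) (fun _ => 1 : M rA ((-1)+1)) = 0 := by
    funext j; exact absurd j.isLt (by norm_num [rA])
  rw [LinearMap.sub_apply, LinearMap.sub_apply, LinearMap.comp_apply,
    LinearMap.comp_apply, LinearMap.comp_apply, LinearMap.comp_apply,
    efm0, map_smul, edam, map_zero] at E2
  simp only [Pi.sub_apply] at E2
  rw [ehm, edd] at E2
  simp only [Pi.smul_apply, smul_eq_mul, Pi.zero_apply, sub_zero] at E2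
  -- connect the two presentations of the same scalar
  have hc : S ((-1)+1) (fun _ => 1 : M rA ((-1)+1)) (⟨0, Nat.one_pos⟩ : Fin (rC ((-1)+1+1)))
      = S 0 (fun _ => 1 : M rA 0) (⟨0, Nat.one_pos⟩ : Fin (rC (0+1))) := rfl
  rw [hc] at E2
  omega

theorem statement16 :
    -- the four graded objects are chain complexes:
    (∀ m : ℤ, (dA m).comp (dA (m+1)) = 0) ∧ (∀ m : ℤ, (dB m).comp (dB (m+1)) = 0) ∧
    (∀ m : ℤ, (dC m).comp (dC (m+1)) = 0) ∧ (∀ m : ℤ, (dD m).comp (dD (m+1)) = 0) ∧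
    -- f, g, h are chain maps:
    (∀ m : ℤ, (dB m).comp (fm (m+1)) = (fm m).comp (dA m)) ∧
    (∀ m : ℤ, (dC m).comp (gm (m+1)) = (gm m).comp (dB m)) ∧
    (∀ m : ℤ, (dD m).comp (hm (m+1)) = (hm m).comp (dC m)) ∧
    -- g∘f is nullhomotopic:
    (∃ S : ∀ t : ℤ, M rA t →ₗ[ℤ] M rC (t+1),
      ∀ t : ℤ, (gm (t+1)).comp (fm (t+1)) = (dC (t+1)).comp (S (t+1)) + (S t).comp (dA t)) ∧
    -- h∘g is nullhomotopic:
    (∃ T : ∀ t : ℤ, M rB t →ₗ[ℤ] M rD (t+1),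
      ∀ t : ℤ, (hm (t+1)).comp (gm (t+1)) = (dD (t+1)).comp (T (t+1)) + (T t).comp (dB t)) ∧
    -- for EVERY such S and T, the Toda map φ(S,T) : ΣA → D, with components
    -- φ out of (ΣA)_{t+1} = A_t given by h∘S − T∘f, is not chain homotopic to zero
    -- (the suspension differential being −∂_A):
    (∀ (S : ∀ t : ℤ, M rA t →ₗ[ℤ] M rC (t+1)) (T : ∀ t : ℤ, M rB t →ₗ[ℤ] M rD (t+1)),
      (∀ t : ℤ, (gm (t+1)).comp (fm (t+1)) = (dC (t+1)).comp (S (t+1)) + (S t).comp (dA t)) →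
      (∀ t : ℤ, (hm (t+1)).comp (gm (t+1)) = (dD (t+1)).comp (T (t+1)) + (T t).comp (dB t)) →
      ¬ ∃ U : ∀ t : ℤ, M rA t →ₗ[ℤ] M rD (t+1+1),
          ∀ t : ℤ, (hm (t+1+1)).comp (S (t+1)) - (T (t+1)).comp (fm (t+1))
            = (dD (t+1+1)).comp (U (t+1)) - (U t).comp (dA t)) := by
  refine ⟨?_, ?_, ?_, ?_, ?_, ?_, ?_, ⟨Sdef, ?_⟩, ⟨Tdef, ?_⟩, ?_⟩
  · intro m; ext x i
    simp [dA, Matrix.mulVec, dotProduct]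
    intro h1 h2; omega
  · intro m; ext x i
    simp [dB, Matrix.mulVec, dotProduct]
    intro h1 h2; omega
  · intro m; ext x i
    simp [dC, Matrix.mulVec, dotProduct]
    intro h1 h2; omega
  · intro m; ext x i
    simp [dD, Matrix.mulVec, dotProduct]
    intro h1 h2; omega
  · intro m; ext x i
    simp [dB, fm, dA, Matrix.mulVec, dotProduct]
    split_ifs <;> simp_all [rA, rB] <;> omega
  · intro m; ext x i
    simp [dC, gm, dB, Matrix.mulVec, dotProduct]
    split_ifs <;> simp_all [rB, rC] <;> omega
  · intro m; ext x i
    simp [dD, hm, dC, Matrix.mulVec, dotProduct]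
    split_ifs <;> simp_all [rC, rD] <;> omega
  · intro t; ext x i
    simp [gm, fm, dC, Sdef, dA, Matrix.mulVec, dotProduct]
    split_ifs <;> simp_all [rA, rB, rC] <;> omega
  · intro t; ext x i
    simp [hm, gm, dD, Tdef, dB, Matrix.mulVec, dotProduct]
    split_ifs <;> simp_all [rB, rC, rD] <;> omega
  · intro S T hS hT ⟨U, hU⟩
    exact toda_contradiction S T hS U hU
end
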